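/- A real-linear map A ∈ O(4) acting on ℂ² ≅ ℝ⁴ satisfies that it preserves the Berger metric g(X,Y) = (4/κ)[⟨X,Y⟩ + (4τ²/κ − 1)⟨X,V⟩⟨Y,V⟩] at every point of S³ (with κ ≠ 4τ²) if and only if A∘J = J∘A or A∘J = −J∘A, where J(z,w) = (iz,iw). -/

import Mathlib

open Complex Real

/-- The real inner product on ℂ² ≅ ℝ⁴. -/
noncomputable def ip (x y : ℂ × ℂ) : ℝ :=
  (x.1 * (starRingEnd ℂ) y.1).re + (x.2 * (starRingEnd ℂ) y.2).re

/-- J(z,w) = (iz, iw); V_p = J p. -/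
def Jc (p : ℂ × ℂ) : ℂ × ℂ := (Complex.I * p.1, Complex.I * p.2)

/-- The Berger metric bilinear form at the point p. -/
noncomputable def gB (κ τ : ℝ) (p X Y : ℂ × ℂ) : ℝ :=
  (4 / κ) * (ip X Y + (4 * τ ^ 2 / κ - 1) * ip X (Jc p) * ip Y (Jc p))

lemma ip_comm (x y : ℂ × ℂ) : ip x y = ip y x := by
  simp [ip, Complex.mul_re]; ring

lemma ip_neg_right (x y : ℂ × ℂ) : ip x (-y) = - ip x y := by
  simp [ip, Complex.mul_re]; ring

lemma ip_smul_left (r : ℝ) (x y : ℂ × ℂ) : ip (r • x) y = r * ip x y := by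
  simp [ip, Complex.mul_re, Complex.real_smul]; ring

lemma ip_J_J (x y : ℂ × ℂ) : ip (Jc x) (Jc y) = ip x y := by
  simp [ip, Jc, Complex.mul_re]

lemma ip_J_self (x : ℂ × ℂ) : ip (Jc x) x = 0 := by
  simp [ip, Jc, Complex.mul_re]; ring

lemma ip_self_nonneg (x : ℂ × ℂ) : 0 ≤ ip x x := by
  simp [ip, Complex.mul_re]
  nlinarith [sq_nonneg x.1.re, sq_nonneg x.1.im, sq_nonneg x.2.re, sq_nonneg x.2.im]

lemma ip_self_eq_zero {x : ℂ × ℂ} (h : ip x x = 0) : x = 0 := by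
  simp [ip, Complex.mul_re] at h
  have h1 : x.1 = 0 := by
    apply Complex.ext <;> simp only [Complex.zero_re, Complex.zero_im] <;>
      nlinarith [sq_nonneg x.1.re, sq_nonneg x.1.im, sq_nonneg x.2.re, sq_nonneg x.2.im]
  have h2 : x.2 = 0 := by
    apply Complex.ext <;> simp only [Complex.zero_re, Complex.zero_im] <;>
      nlinarith [sq_nonneg x.1.re, sq_nonneg x.1.im, sq_nonneg x.2.re, sq_nonneg x.2.im]
  exact Prod.ext h1 h2

lemma ip_sub_self (x y : ℂ × ℂ) :
    ip (x - y) (x - y) = ip x x - 2 * ip x y + ip y y := by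
  simp [ip, Complex.mul_re]; ring

lemma ip_add_self (x y : ℂ × ℂ) :
    ip (x + y) (x + y) = ip x x + 2 * ip x y + ip y y := by
  simp [ip, Complex.mul_re]; ring

lemma ip_self_abs (x : ℂ × ℂ) :
    ip x x = ‖x.1‖ ^ 2 + ‖x.2‖ ^ 2 := by
  rw [Complex.sq_norm, Complex.sq_norm]
  simp [ip, Complex.mul_re, Complex.normSq_apply]

lemma Jc_add (x y : ℂ × ℂ) : Jc (x + y) = Jc x + Jc y := by
  simp [Jc, Prod.ext_iff]; constructor <;> ring

lemma Jc_neg (x : ℂ × ℂ) : Jc (-x) = - Jc x := by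
  simp [Jc, Prod.ext_iff]

lemma Jc_smul (r : ℝ) (x : ℂ × ℂ) : Jc (r • x) = r • Jc x := by
  simp [Jc, Prod.ext_iff, Complex.real_smul]; constructor <;> ring

lemma Jc_zero : Jc 0 = 0 := by simp [Jc]

lemma Jc_eq_zero {x : ℂ × ℂ} (h : Jc x = 0) : x = 0 := by
  simp [Jc, Prod.ext_iff, Complex.I_ne_zero] at h
  exact Prod.ext h.1 h.2

/-- A real-linear orthogonal map A of ℝ⁴ ≅ ℂ² preserves the Berger metric at
every point of S³ (for κ ≠ 4τ²) iff A∘J = J∘A or A∘J = -J∘A. -/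
theorem orthogonal_preserves_berger_iff_commutes_J
    (κ τ : ℝ) (hκ : 0 < κ) (hτ : τ ≠ 0) (hne : κ ≠ 4 * τ ^ 2)
    (A : (ℂ × ℂ) →ₗ[ℝ] ℂ × ℂ) (hA : ∀ x y : ℂ × ℂ, ip (A x) (A y) = ip x y) :
    (∀ p : ℂ × ℂ, ‖p.1‖ ^ 2 + ‖p.2‖ ^ 2 = 1 →
      ∀ X Y : ℂ × ℂ, ip X p = 0 → ip Y p = 0 →
        gB κ τ (A p) (A X) (A Y) = gB κ τ p X Y) ↔
    ((∀ x : ℂ × ℂ, A (Jc x) = Jc (A x)) ∨ (∀ x : ℂ × ℂ, A (Jc x) = - Jc (A x))) := by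
  have hκ0 : κ ≠ 0 := ne_of_gt hκ
  have hlam : 4 * τ ^ 2 / κ - 1 ≠ 0 := by
    intro hcon
    apply hne
    have h1 : 4 * τ ^ 2 / κ = 1 := by linarith
    field_simp at h1
    linarith
  constructor
  · intro H
    -- pointwise dichotomy on the unit sphere
    have key : ∀ p : ℂ × ℂ, ip p p = 1 →
        A (Jc p) = Jc (A p) ∨ A (Jc p) = - Jc (A p) := by
      intro p hpp
      have hp : ‖p.1‖ ^ 2 + ‖p.2‖ ^ 2 = 1 := by
        rw [← ip_self_abs]; exact hpp
      have h0 := H p hp (Jc p) (Jc p) (ip_J_self p) (ip_J_self p)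
      unfold gB at h0
      rw [hA (Jc p) (Jc p)] at h0
      have hJJ : ip (Jc p) (Jc p) = 1 := by rw [ip_J_J]; exact hpp
      rw [hJJ] at h0
      set c := ip (A (Jc p)) (Jc (A p)) with hc_def
      have h2 := mul_left_cancel₀ (show (4 : ℝ)/κ ≠ 0 from div_ne_zero (by norm_num) hκ0) h0
      have h1 : (4 * τ ^ 2 / κ - 1) * (c * c) = (4 * τ ^ 2 / κ - 1) * 1 := by
        linear_combination h2
      have hc2 : c * c = 1 := mul_left_cancel₀ hlam h1
      have hAJ : ip (A (Jc p)) (A (Jc p)) = 1 := by rw [hA]; exact hJJ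
      have hJA : ip (Jc (A p)) (Jc (A p)) = 1 := by rw [ip_J_J, hA]; exact hpp
      rcases mul_self_eq_one_iff.mp hc2 with hc1 | hc1
      · left
        have hz : ip (A (Jc p) - Jc (A p)) (A (Jc p) - Jc (A p)) = 0 := by
          rw [ip_sub_self, hAJ, hJA, ← hc_def, hc1]; ring
        have := ip_self_eq_zero hz
        exact sub_eq_zero.mp this
      · right
        have hz : ip (A (Jc p) + Jc (A p)) (A (Jc p) + Jc (A p)) = 0 := by
          rw [ip_add_self, hAJ, hJA, ← hc_def, hc1]; ring
        have := ip_self_eq_zero hz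
        exact eq_neg_of_add_eq_zero_left this
    -- injectivity facts
    have hAinj : ∀ x : ℂ × ℂ, A x = 0 → x = 0 := by
      intro x hx
      apply ip_self_eq_zero
      rw [← hA x x, hx]
      simp [ip]
    -- dichotomy for all nonzero vectors
    have dich : ∀ v : ℂ × ℂ, v ≠ 0 →
        A (Jc v) = Jc (A v) ∨ A (Jc v) = - Jc (A v) := by
      intro v hv
      have hvv : 0 < ip v v := by
        rcases lt_or_eq_of_le (ip_self_nonneg v) with h | h
        · exact h
        · exact absurd (ip_self_eq_zero h.symm) hv
      set n : ℝ := Real.sqrt (ip v v) with hn_def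
      have hn : 0 < n := Real.sqrt_pos.mpr hvv
      have hn2 : n * n = ip v v := Real.mul_self_sqrt hvv.le
      set p : ℂ × ℂ := n⁻¹ • v with hp_def
      have hpp : ip p p = 1 := by
        rw [hp_def, ip_smul_left, ip_comm, ip_smul_left, ip_comm, ← hn2]
        field_simp
      rcases key p hpp with h | h
      · left
        have h' : n⁻¹ • A (Jc v) = n⁻¹ • Jc (A v) := by
          have e1 : A (Jc p) = n⁻¹ • A (Jc v) := by
            rw [hp_def, Jc_smul, map_smul]
          have e2 : Jc (A p) = n⁻¹ • Jc (A v) := by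
            rw [hp_def, map_smul, Jc_smul]
          rw [← e1, ← e2, h]
        exact smul_right_injective (ℂ × ℂ) (inv_ne_zero hn.ne') h'
      · right
        have h' : n⁻¹ • A (Jc v) = n⁻¹ • (- Jc (A v)) := by
          have e1 : A (Jc p) = n⁻¹ • A (Jc v) := by
            rw [hp_def, Jc_smul, map_smul]
          have e2 : Jc (A p) = n⁻¹ • Jc (A v) := by
            rw [hp_def, map_smul, Jc_smul]
          rw [← e1, h, e2, smul_neg]
        exact smul_right_injective (ℂ × ℂ) (inv_ne_zero hn.ne') h'
    -- propagation from a base point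
    set e : ℂ × ℂ := ((1 : ℂ), (0 : ℂ)) with he_def
    have he0 : e ≠ 0 := by
      simp [he_def, Prod.ext_iff]
    have hAe : A e ≠ 0 := fun h => he0 (hAinj e h)
    have hJAe : Jc (A e) ≠ 0 := fun h => hAe (Jc_eq_zero h)
    rcases dich e he0 with hE | hE
    · left
      intro x
      by_cases hx0 : x = 0
      · simp [hx0, Jc_zero]
      by_cases hxe : x + e = 0
      · have hxneg : x = -e := by
          rw [eq_neg_iff_add_eq_zero]; exact hxe
        rw [hxneg, Jc_neg, map_neg, map_neg, Jc_neg, hE]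
      rcases dich x hx0 with h | h
      · exact h
      rcases dich (x + e) hxe with h2 | h2
      · rw [Jc_add, map_add, map_add, Jc_add, hE] at h2
        have : A (Jc x) = Jc (A x) := by
          have := add_right_cancel h2
          exact this
        exact this
      · exfalso
        rw [Jc_add, map_add, map_add, Jc_add, hE, h] at h2
        have h3 : Jc (A e) + Jc (A e) = 0 := by
          have : (-Jc (A x)) + Jc (A e) = -Jc (A x) + (- Jc (A e)) := by
            rw [h2]; abel
          have h4 := add_left_cancel this
          linear_combination h4
        have h5 : (2 : ℝ) • Jc (A e) = 0 := by
          rw [two_smul]; exact h3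
        rcases smul_eq_zero.mp h5 with h6 | h6
        · norm_num at h6
        · exact hJAe h6
    · right
      intro x
      by_cases hx0 : x = 0
      · simp [hx0, Jc_zero]
      by_cases hxe : x + e = 0
      · have hxneg : x = -e := by
          rw [eq_neg_iff_add_eq_zero]; exact hxe
        rw [hxneg, Jc_neg, map_neg, map_neg, Jc_neg, hE]
      rcases dich x hx0 with h | h
      swap
      · exact h
      exfalso
      rcases dich (x + e) hxe with h2 | h2
      · rw [Jc_add, map_add, map_add, Jc_add, hE, h] at h2
        have h3 : Jc (A e) + Jc (A e) = 0 := by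
          have h4 := add_left_cancel h2
          linear_combination - h4
        have h5 : (2 : ℝ) • Jc (A e) = 0 := by
          rw [two_smul]; exact h3
        rcases smul_eq_zero.mp h5 with h6 | h6
        · norm_num at h6
        · exact hJAe h6
      · rw [Jc_add, map_add, map_add, Jc_add, hE, h] at h2
        have h3 : Jc (A x) + Jc (A x) = 0 := by
          linear_combination h2
        have h5 : (2 : ℝ) • Jc (A x) = 0 := by
          rw [two_smul]; exact h3
        rcases smul_eq_zero.mp h5 with h6 | h6
        · norm_num at h6
        · exact hx0 (hAinj x (Jc_eq_zero h6))
  · intro h p hp X Y hX hY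
    unfold gB
    rw [hA X Y]
    rcases h with h | h
    · rw [← h p, hA, hA]
    · have hJ : Jc (A p) = - A (Jc p) := by rw [h p, neg_neg]
      rw [hJ, ip_neg_right, ip_neg_right, hA, hA]
      ring
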